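/- Let G be a finite p-group of nilpotence class exactly 2 and order p^n. Then the commutator subgroup G' = [G,G] has exponent dividing p^{⌊n/3⌋}. -/

import Mathlib

open scoped commutatorElement

section aux

variable {G : Type*} [Group G]

lemma aux_comm_mul_left (hc : ∀ a b : G, ⁅a, b⁆ ∈ Subgroup.center G)
    (a b c : G) : ⁅a * b, c⁆ = ⁅a, c⁆ * ⁅b, c⁆ := by
  have h1 : ⁅a * b, c⁆ = a * ⁅b, c⁆ * a⁻¹ * ⁅a, c⁆ := by group
  have h2 := (Subgroup.mem_center_iff.mp (hc b c)) a
  have h3 := (Subgroup.mem_center_iff.mp (hc b c)) ⁅a, c⁆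
  rw [h1, h2, mul_inv_cancel_right, ← h3]

lemma aux_comm_mul_right (hc : ∀ a b : G, ⁅a, b⁆ ∈ Subgroup.center G)
    (a b c : G) : ⁅a, b * c⁆ = ⁅a, b⁆ * ⁅a, c⁆ := by
  have h1 : ⁅a, b * c⁆ = ⁅a, b⁆ * (b * ⁅a, c⁆ * b⁻¹) := by group
  have h2 := (Subgroup.mem_center_iff.mp (hc a c)) b
  rw [h1, h2, mul_inv_cancel_right]

lemma aux_comm_pow_right (hc : ∀ a b : G, ⁅a, b⁆ ∈ Subgroup.center G)
    (a b : G) (k : ℕ) : ⁅a, b ^ k⁆ = ⁅a, b⁆ ^ k := by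
  induction k with
  | zero => simp
  | succ k ih =>
      rw [pow_succ, aux_comm_mul_right hc, ih, pow_succ]

end aux

theorem stmt9 {G : Type*} [Group G] [Finite G] {p n : ℕ} (hp : p.Prime)
    (hG : Nat.card G = p ^ n)
    (hcl : Subgroup.lowerCentralSeries (⊤ : Subgroup G) 2 = ⊥) (hcl' : Subgroup.lowerCentralSeries (⊤ : Subgroup G) 1 ≠ ⊥) :
    Monoid.exponent (commutator G) ∣ p ^ (n / 3) := by
  have hp1 : 1 < p := hp.one_lt
  -- commutator subgroup is central
  have hcomm_le : commutator G ≤ Subgroup.center G := by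
    have h2 : Subgroup.lowerCentralSeries (⊤ : Subgroup G) 2 = ⁅Subgroup.lowerCentralSeries (⊤ : Subgroup G) 1, (⊤ : Subgroup G)⁆ := rfl
    rw [Subgroup.top_lowerCentralSeries_one] at h2
    rw [h2] at hcl
    have := Subgroup.commutator_eq_bot_iff_le_centralizer.mp hcl
    rwa [Subgroup.coe_top, Subgroup.centralizer_univ] at this
  have hc : ∀ a b : G, ⁅a, b⁆ ∈ Subgroup.center G := fun a b =>
    hcomm_le (commutator_def G ▸ Subgroup.commutator_mem_commutator
      (Subgroup.mem_top a) (Subgroup.mem_top b))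
  -- the exponent is a power of p
  have hEdvd : Monoid.exponent (commutator G) ∣ p ^ n := by
    calc Monoid.exponent (commutator G) ∣ Nat.card (commutator G) :=
          Group.exponent_dvd_nat_card
      _ ∣ Nat.card G := Subgroup.card_subgroup_dvd_card _
      _ = p ^ n := hG
  obtain ⟨e, he, hE⟩ := (Nat.dvd_prime_pow hp).mp hEdvd
  rcases Nat.eq_zero_or_pos e with he0 | hepos
  · rw [hE, he0, pow_zero]; exact one_dvd _
  -- find a commutator element whose order is not killed by p^(e-1)
  obtain ⟨x, y, hxy⟩ : ∃ x y : G, ⁅x, y⁆ ^ p ^ (e - 1) ≠ 1 := by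
    by_contra hcon
    push_neg at hcon
    have hall : ∀ z ∈ commutator G, z ^ p ^ (e - 1) = 1 := by
      intro z hz
      rw [commutator_eq_closure] at hz
      induction hz using Subgroup.closure_induction with
      | mem g hg =>
          obtain ⟨a, b, rfl⟩ := hg
          exact hcon a b
      | one => simp
      | mul a b ha hb iha ihb =>
          have hcab : Commute a b := by
            have hamem : a ∈ Subgroup.center G := by
              rw [← commutator_eq_closure] at ha
              exact hcomm_le ha
            exact ((Subgroup.mem_center_iff.mp hamem) b).symm
          rw [hcab.mul_pow, iha, ihb, one_mul]
      | inv a ha iha => rw [inv_pow, iha, inv_one]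
    have hdvd : Monoid.exponent (commutator G) ∣ p ^ (e - 1) := by
      refine Monoid.exponent_dvd_of_forall_pow_eq_one fun z => ?_
      have : ((z : G)) ^ p ^ (e - 1) = 1 := hall _ z.2
      ext
      simpa using this
    rw [hE] at hdvd
    have := Nat.le_of_dvd (pow_pos hp.pos _) hdvd
    have hlt : p ^ (e - 1) < p ^ e := Nat.pow_lt_pow_right hp1 (by omega)
    omega
  -- extract a commutator of order exactly p^e
  have hgord : p ^ e ∣ orderOf ⁅x, y⁆ := by
    have h1 : orderOf ⁅x, y⁆ ∣ p ^ n := hG ▸ orderOf_dvd_natCard _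
    obtain ⟨k, hk, hok⟩ := (Nat.dvd_prime_pow hp).mp h1
    rw [hok]
    apply pow_dvd_pow
    by_contra hke
    have : orderOf ⁅x, y⁆ ∣ p ^ (e - 1) := by
      rw [hok]; exact pow_dvd_pow _ (by omega)
    exact hxy (orderOf_dvd_iff_pow_eq_one.mp this)
  set t := orderOf ⁅x, y⁆ / p ^ e with ht
  have htdvd : t ∣ orderOf ⁅x, y⁆ := by
    rw [ht]
    exact Nat.div_dvd_of_dvd hgord
  have htpos : 0 < t := Nat.div_pos (Nat.le_of_dvd (orderOf_pos _) hgord)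
    (pow_pos hp.pos _)
  set c : G := ⁅x, y⁆ ^ t with hcdef
  have hc_ord : orderOf c = p ^ e := by
    rw [hcdef, orderOf_pow, Nat.gcd_eq_right htdvd, ht,
      Nat.div_div_self hgord ((orderOf_pos _).ne')]
  set y' : G := y ^ t with hy'
  have hcy' : c = ⁅x, y'⁆ := by
    rw [hy', hcdef, aux_comm_pow_right hc]
  -- the homomorphism g ↦ ⁅g, y'⁆
  let φ : G →* Subgroup.center G :=
    MonoidHom.mk' (fun g => ⟨⁅g, y'⁆, hc g y'⟩)
      (fun a b => Subtype.ext (aux_comm_mul_left hc a b y'))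
  have hφx : ((φ x : Subgroup.center G) : G) = c := by simp [φ, hcy']
  have hrange1 : p ^ e ∣ Nat.card φ.range := by
    have hmem : φ x ∈ φ.range := ⟨x, rfl⟩
    have : orderOf (⟨φ x, hmem⟩ : φ.range) = p ^ e := by
      rw [← hc_ord, ← hφx]
      rw [← orderOf_injective ((Subgroup.center G).subtype.comp φ.range.subtype)
        ((Subgroup.center G).subtype_injective.comp φ.range.subtype_injective)]
      rfl
    rw [← this]
    exact orderOf_dvd_natCard _
  -- the homomorphism k ↦ ⁅x, k⁆ on the kernel of φ
  let ψ : φ.ker →* Subgroup.center G :=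
    MonoidHom.mk' (fun k => ⟨⁅x, (k : G)⁆, hc x k⟩)
      (fun a b => Subtype.ext (aux_comm_mul_right hc x a b))
  have hy'ker : y' ∈ φ.ker := by
    rw [MonoidHom.mem_ker]
    exact Subtype.ext (by simp [φ, commutatorElement_self])
  have hrange2 : p ^ e ∣ Nat.card ψ.range := by
    have hmem : ψ ⟨y', hy'ker⟩ ∈ ψ.range := ⟨⟨y', hy'ker⟩, rfl⟩
    have hval : ((ψ ⟨y', hy'ker⟩ : Subgroup.center G) : G) = c := by
      simp [ψ, hcy']
    have : orderOf (⟨ψ ⟨y', hy'ker⟩, hmem⟩ : ψ.range) = p ^ e := by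
      rw [← hc_ord, ← hval]
      rw [← orderOf_injective ((Subgroup.center G).subtype.comp ψ.range.subtype)
        ((Subgroup.center G).subtype_injective.comp ψ.range.subtype_injective)]
      rfl
    rw [← this]
    exact orderOf_dvd_natCard _
  -- c lies in the kernel of ψ
  have hccenter : c ∈ Subgroup.center G := hcy' ▸ hc x y'
  have hcker : c ∈ φ.ker := by
    rw [MonoidHom.mem_ker]
    refine Subtype.ext ?_
    show ⁅c, y'⁆ = 1
    exact commutatorElement_eq_one_iff_commute.mpr
      ((Subgroup.mem_center_iff.mp hccenter y').symm)
  have hckerψ : (⟨c, hcker⟩ : φ.ker) ∈ ψ.ker := by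
    rw [MonoidHom.mem_ker]
    refine Subtype.ext ?_
    show ⁅x, c⁆ = 1
    exact commutatorElement_eq_one_iff_commute.mpr
      (Subgroup.mem_center_iff.mp hccenter x)
  have hker2 : p ^ e ∣ Nat.card ψ.ker := by
    have : orderOf (⟨⟨c, hcker⟩, hckerψ⟩ : ψ.ker) = p ^ e := by
      rw [← hc_ord]
      rw [← orderOf_injective (φ.ker.subtype.comp ψ.ker.subtype)
        (φ.ker.subtype_injective.comp ψ.ker.subtype_injective)]
      rfl
    rw [← this]
    exact orderOf_dvd_natCard _
  -- counting
  have hcount1 : Nat.card G = Nat.card φ.range * Nat.card φ.ker := by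
    rw [Subgroup.card_eq_card_quotient_mul_card_subgroup φ.ker,
      Nat.card_congr (QuotientGroup.quotientKerEquivRange φ).toEquiv]
  have hcount2 : Nat.card φ.ker = Nat.card ψ.range * Nat.card ψ.ker := by
    rw [Subgroup.card_eq_card_quotient_mul_card_subgroup ψ.ker,
      Nat.card_congr (QuotientGroup.quotientKerEquivRange ψ).toEquiv]
  have hbig : p ^ (3 * e) ∣ p ^ n := by
    rw [← hG, hcount1, hcount2]
    have : p ^ (3 * e) = p ^ e * (p ^ e * p ^ e) := by ring
    rw [this]
    exact mul_dvd_mul hrange1 (mul_dvd_mul hrange2 hker2)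
  have h3e : 3 * e ≤ n := (Nat.pow_dvd_pow_iff_le_right hp1).mp hbig
  have hen3 : e ≤ n / 3 := Nat.le_div_iff_mul_le (by norm_num) |>.mpr (by omega)
  rw [hE]
  exact pow_dvd_pow p hen3
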